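/- Let q be a prime power which is a perfect square with integer square root s = √q, and let a be a root of the polynomial f(X) = X^{s+1} + X + 1 in the algebraic closure of F_q. Then a^{q+s+1} = 1, and hence a^{s³} = a, i.e., a lies in the field F_{s³}. -/
import Mathlib


/-- s a prime power, q = s², a a root of X^{s+1}+X+1 in the
algebraic closure of F_s. Then a^{q+s+1} = 1 and a^{s³} = a. -/
theorem stmt6 {K : Type*} [Field K] [IsAlgClosed K] (p n s q : ℕ)
    (hp : p.Prime) [CharP K p] (hs : s = p ^ n) (hn : 0 < n) (hq : q = s ^ 2)
    (a : K) (ha : a ^ (s + 1) + a + 1 = 0) :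
    a ^ (q + s + 1) = 1 ∧ a ^ (s ^ 3) = a := by
  haveI : Fact p.Prime := ⟨hp⟩
  have hfr : ∀ x y : K, (x + y) ^ s = x ^ s + y ^ s := by
    intro x y; rw [hs]; exact add_pow_char_pow (x := x) (y := y) p n
  have hneg : (-1 : K) ^ s = -1 := by rw [hs]; exact neg_one_pow_char_pow K p n
  have h1 : a ^ (s + 1) = -(a + 1) := by linear_combination ha
  have h2 : a ^ (s * (s + 1)) = -(a ^ s + 1) := by
    rw [mul_comm, pow_mul, h1, show (-(a+1)) = (-1)*(a+1) from by ring, mul_pow, hneg,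
      hfr, one_pow]
    ring
  have key : a ^ (s ^ 2 + s + 1) = 1 := by
    have : s ^ 2 + s + 1 = s * (s + 1) + 1 := by ring
    rw [this, pow_succ, h2]
    have h3 : a ^ s * a = -(a + 1) := by rw [← pow_succ, h1]
    linear_combination -h3
  constructor
  · rw [hq]; exact key
  · have hs1 : 1 ≤ s := by rw [hs]; exact Nat.one_le_pow _ _ hp.pos
    have : s ^ 3 = (s ^ 2 + s + 1) * (s - 1) + 1 := by
      cases' Nat.exists_eq_add_of_le hs1 with k hk
      subst hk
      have h4 : 1 + k - 1 = k := by omega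
      rw [h4]; ring
    rw [this, pow_succ, pow_mul, key, one_pow, one_mul]
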